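/- Let α* ∈ (0,1), u* > 0, e*(α) = u*/(−(1−α)·ln(1−α*)) on [0,1), and c*(α) = α·e*(α) − ∫₀^α e*(t) dt. Suppose u : [0,1] → ℝ satisfies u(α) ≤ (−ln(1−α))·u*/(−ln(1−α*)) for all α ∈ [0,1). If e*(α₀) ≥ x for some α₀ and x = e*(α₀), then α₀·x − c*(α₀) ≥ u(α₀). -/

import Mathlib

theorem stmt_11 (αs us : ℝ) (hαs : αs ∈ Set.Ioo (0:ℝ) 1) (hus : 0 < us)
    (es cs u : ℝ → ℝ) (hes : ∀ α, es α = us / (-(1 - α) * Real.log (1 - αs)))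
    (hcs : ∀ α, cs α = α * es α - ∫ t in (0:ℝ)..α, es t)
    (hu : ∀ α ∈ Set.Ico (0:ℝ) 1,
      u α ≤ (-Real.log (1 - α)) * us / (-Real.log (1 - αs)))
    (α₀ x : ℝ) (hα₀ : α₀ ∈ Set.Ico (0:ℝ) 1) (hge : es α₀ ≥ x) (hx : x = es α₀) :
    α₀ * x - cs α₀ ≥ u α₀ := by
  obtain ⟨hαs0, hαs1⟩ := hαs
  obtain ⟨hα₀0, hα₀1⟩ := hα₀
  set L := Real.log (1 - αs) with hL
  have hLneg : L < 0 := Real.log_neg (by linarith) (by linarith)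
  have hesfun : es = fun t => us / (-(1 - t) * L) := funext hes
  have hInt : ∫ t in (0:ℝ)..α₀, es t = us / (-L) * (-Real.log (1 - α₀)) := by
    have h1 : ∀ t ∈ Set.uIcc (0:ℝ) α₀,
        HasDerivAt (fun s => us / (-L) * (-Real.log (1 - s))) (es t) t := by
      intro t ht
      rw [Set.uIcc_of_le hα₀0] at ht
      have ht1 : (0:ℝ) < 1 - t := by linarith [ht.2]
      have h := (((Real.hasDerivAt_log (ne_of_gt ht1)).comp t
        ((hasDerivAt_id t).const_sub 1)).neg.const_mul (us / (-L)))
      refine h.congr_deriv ?_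
      rw [hes]
      field_simp
    have hInteg : IntervalIntegrable es MeasureTheory.volume 0 α₀ := by
      apply ContinuousOn.intervalIntegrable
      rw [hesfun]
      apply ContinuousOn.div continuousOn_const
      · fun_prop
      · intro t ht
        rw [Set.uIcc_of_le hα₀0] at ht
        have ht1 : (0:ℝ) < 1 - t := by linarith [ht.2]
        have : -(1 - t) * L > 0 := by nlinarith
        exact ne_of_gt this
    rw [intervalIntegral.integral_eq_sub_of_hasDerivAt h1 hInteg]
    simp
  have hu0 := hu α₀ ⟨hα₀0, hα₀1⟩
  rw [hx, hcs]
  have : α₀ * es α₀ - (α₀ * es α₀ - ∫ t in (0:ℝ)..α₀, es t)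
      = us / (-L) * (-Real.log (1 - α₀)) := by rw [hInt]; ring
  rw [ge_iff_le, this]
  calc u α₀ ≤ (-Real.log (1 - α₀)) * us / (-L) := hu0
    _ = us / (-L) * (-Real.log (1 - α₀)) := by ring
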